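/- arXiv:2008.06636 — 3 statements merged into one kernel-verified Lean document; each statement's English description precedes it below -/
import Mathlib

section
/- Let F : H → H be quasi-nonexpansive with nonempty fixed point set, and suppose F is linearly regular with constant κ > 0, i.e., d_{Fix(F)}(x) ≤ κ‖F(x) − x‖ for all x. For α ∈ (0,1), the relaxation F_α := Id + α(F − Id) satisfies d_{Fix(F)}(F_α(x)) ≤ √(1 − α(1−α)/κ²) · d_{Fix(F)}(x) for all x ∈ H. -/
/-- If `F` is quasi-nonexpansive with nonempty fixed point set and linearly regular with
constant `κ > 0`, then for `α ∈ (0,1)` the relaxation `F_α = Id + α(F - Id)` satisfies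
`d_{Fix F}(F_α x) ≤ √(1 - α(1-α)/κ²) d_{Fix F}(x)`. -/
theorem relaxation_contracts_distance_sqrt
    {H : Type*} [NormedAddCommGroup H] [InnerProductSpace ℝ H]
    (F : H → H)
    (hQNE : ∀ x y, F y = y → ‖F x - y‖ ≤ ‖x - y‖)
    (hne : ∃ y, F y = y)
    (κ : ℝ) (hκ : 0 < κ)
    (hreg : ∀ x, Metric.infDist x {y : H | F y = y} ≤ κ * ‖F x - x‖)
    (α : ℝ) (hα : α ∈ Set.Ioo (0 : ℝ) 1) :
    ∀ x : H,
      Metric.infDist (x + α • (F x - x)) {y : H | F y = y} ≤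
        Real.sqrt (1 - α * (1 - α) / κ ^ 2) * Metric.infDist x {y : H | F y = y} := by
  intro x
  set S : Set H := {y : H | F y = y} with hS
  have hSne : S.Nonempty := hne
  obtain ⟨hα0, hα1⟩ := hα
  set d := Metric.infDist x S with hd
  set dα := Metric.infDist (x + α • (F x - x)) S with hdα
  set u := F x - x with hu
  have hd0 : 0 ≤ d := Metric.infDist_nonneg
  have hdα0 : 0 ≤ dα := Metric.infDist_nonneg
  -- key pointwise inequality
  have key : ∀ y ∈ S, ‖(x + α • u) - y‖ ^ 2 ≤ ‖x - y‖ ^ 2 - α * (1 - α) * ‖u‖ ^ 2 := by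
    intro y hy
    have hq : ‖F x - y‖ ≤ ‖x - y‖ := hQNE x y hy
    set v := x - y with hv
    have huv : F x - y = u + v := by rw [hu, hv]; abel
    have hsq : ‖u + v‖ ^ 2 ≤ ‖v‖ ^ 2 := by
      rw [← huv]
      exact pow_le_pow_left₀ (norm_nonneg _) hq 2
    have hexp : ‖u + v‖ ^ 2 = ‖u‖ ^ 2 + 2 * inner ℝ u v + ‖v‖ ^ 2 := by
      rw [norm_add_sq_real]
    have hIP : 2 * (inner ℝ u v : ℝ) ≤ -‖u‖ ^ 2 := by nlinarith [hexp, hsq]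
    have hgoal : (x + α • u) - y = v + α • u := by rw [hv]; abel
    rw [hgoal]
    have hexp2 : ‖v + α • u‖ ^ 2 = ‖v‖ ^ 2 + 2 * α * inner ℝ u v + α ^ 2 * ‖u‖ ^ 2 := by
      rw [norm_add_sq_real, real_inner_smul_right, norm_smul, mul_pow, Real.norm_eq_abs,
        sq_abs, real_inner_comm]
      ring
    nlinarith [mul_le_mul_of_nonneg_left hIP hα0.le]
  -- squared distance inequality
  have sq_ineq : dα ^ 2 + α * (1 - α) * ‖u‖ ^ 2 ≤ d ^ 2 := by
    have step : ∀ r ∈ Set.Ioi d, dα ^ 2 + α * (1 - α) * ‖u‖ ^ 2 ≤ r ^ 2 := by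
      intro r hr
      obtain ⟨y, hy, hxy⟩ := (Metric.infDist_lt_iff hSne).mp hr
      have h1 : dα ≤ ‖(x + α • u) - y‖ := by
        rw [← dist_eq_norm]
        exact Metric.infDist_le_dist_of_mem hy
      have h2 := key y hy
      have h3 : ‖x - y‖ < r := by rwa [← dist_eq_norm]
      have h4 : ‖x - y‖ ^ 2 ≤ r ^ 2 :=
        pow_le_pow_left₀ (norm_nonneg _) h3.le 2
      nlinarith [norm_nonneg ((x + α • u) - y), hdα0]
    have cont : Filter.Tendsto (fun r : ℝ => r ^ 2) (nhdsWithin d (Set.Ioi d))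
        (nhds (d ^ 2)) := ((continuous_pow 2).tendsto d).mono_left nhdsWithin_le_nhds
    exact ge_of_tendsto cont (Filter.eventually_of_mem self_mem_nhdsWithin step)
  -- use linear regularity
  have hreg' : d ≤ κ * ‖u‖ := hreg x
  have hu2 : d ^ 2 / κ ^ 2 ≤ ‖u‖ ^ 2 := by
    rw [div_le_iff₀ (by positivity)]
    nlinarith [norm_nonneg u]
  have main : dα ^ 2 ≤ (1 - α * (1 - α) / κ ^ 2) * d ^ 2 := by
    have hc : 0 ≤ α * (1 - α) := by nlinarith
    have : α * (1 - α) * (d ^ 2 / κ ^ 2) ≤ α * (1 - α) * ‖u‖ ^ 2 :=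
      mul_le_mul_of_nonneg_left hu2 hc
    have hκ2 : (0:ℝ) < κ ^ 2 := by positivity
    rw [sub_mul, one_mul, div_mul_eq_mul_div, mul_div_assoc]
    nlinarith [sq_ineq]
  rcases eq_or_lt_of_le hd0 with hdz | hdpos
  · have hd' : d = 0 := hdz.symm
    have h1 : dα ^ 2 ≤ 0 := by
      calc dα ^ 2 ≤ (1 - α * (1 - α) / κ ^ 2) * d ^ 2 := main
        _ = 0 := by rw [hd']; ring
    have h2 : dα = 0 := le_antisymm (by nlinarith) hdα0
    rw [h2, hd']
    simp
  · have hcnn : 0 ≤ 1 - α * (1 - α) / κ ^ 2 := by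
      have h0 : 0 ≤ (1 - α * (1 - α) / κ ^ 2) * d ^ 2 := le_trans (sq_nonneg dα) main
      by_contra hneg
      push_neg at hneg
      have : (1 - α * (1 - α) / κ ^ 2) * d ^ 2 < 0 :=
        mul_neg_of_neg_of_pos hneg (by positivity)
      linarith
    calc dα = Real.sqrt (dα ^ 2) := by rw [Real.sqrt_sq hdα0]
      _ ≤ Real.sqrt ((1 - α * (1 - α) / κ ^ 2) * d ^ 2) := Real.sqrt_le_sqrt main
      _ = Real.sqrt (1 - α * (1 - α) / κ ^ 2) * d := by
          rw [Real.sqrt_mul hcnn, Real.sqrt_sq hd0]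
end

section
/- Let F : H → H be quasi-nonexpansive with Fix(F) ≠ ∅, linearly regular with constant κ > 0. Fix δ ∈ (0,1) and assume α(1−α) ≤ κ². Then for all α ∈ (0, 1−δ], the relaxation F_α := Id + α(F − Id) satisfies d_{Fix(F)}(F_α(x)) ≤ (1 − δα/(4κ²)) d_{Fix(F)}(x) for all x ∈ H. -/
/-- Lemma 7 (l1) of the paper: for a quasi-nonexpansive, linearly regular operator `F`
with constant `κ > 0`, any `δ ∈ (0,1)`, and `α ∈ (0, 1-δ]` with `α(1-α) ≤ κ²`,
the relaxation `F_α = Id + α(F - Id)` satisfies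
`d_{Fix F}(F_α x) ≤ (1 - δα/(4κ²)) d_{Fix F}(x)`. -/
theorem relaxation_linear_contraction
    {H : Type*} [NormedAddCommGroup H] [InnerProductSpace ℝ H]
    (F : H → H)
    (hQNE : ∀ x y, F y = y → ‖F x - y‖ ≤ ‖x - y‖)
    (hne : ∃ y, F y = y)
    (κ : ℝ) (hκ : 0 < κ)
    (hreg : ∀ x, Metric.infDist x {y : H | F y = y} ≤ κ * ‖F x - x‖)
    (δ : ℝ) (hδ : δ ∈ Set.Ioo (0 : ℝ) 1)
    (α : ℝ) (hα : 0 < α) (hα' : α ≤ 1 - δ)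
    (hκα : α * (1 - α) ≤ κ ^ 2) :
    ∀ x : H,
      Metric.infDist (x + α • (F x - x)) {y : H | F y = y} ≤
        (1 - δ * α / (4 * κ ^ 2)) * Metric.infDist x {y : H | F y = y} := by
  intro x
  obtain ⟨hδ0, hδ1⟩ := hδ
  set S : Set H := {y : H | F y = y} with hS
  have hSne : S.Nonempty := hne
  set d0 := Metric.infDist x S with hd0
  set d1 := Metric.infDist (x + α • (F x - x)) S with hd1
  have hd0n : 0 ≤ d0 := Metric.infDist_nonneg
  have hd1n : 0 ≤ d1 := Metric.infDist_nonneg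
  have hα1 : α < 1 := lt_of_le_of_lt hα' (by linarith)
  have hκ2 : (0:ℝ) < κ ^ 2 := by positivity
  set t : ℝ := δ * α / κ ^ 2 with ht
  have ht0 : 0 ≤ t := by positivity
  have ht1 : t ≤ 1 := by
    rw [ht, div_le_one hκ2]
    nlinarith
  -- regularity squared
  have hregsq : d0 ^ 2 ≤ κ ^ 2 * ‖F x - x‖ ^ 2 := by
    have h := hreg x
    nlinarith [norm_nonneg (F x - x), hd0n]
  -- key norm estimate for each fixed point
  have key : ∀ y ∈ S, ‖x + α • (F x - x) - y‖ ^ 2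
      ≤ ‖x - y‖ ^ 2 - α * (1 - α) * ‖F x - x‖ ^ 2 := by
    intro y hy
    have hFy : F y = y := hy
    have hq : ‖F x - y‖ ≤ ‖x - y‖ := hQNE x y hFy
    have hq2 : ‖F x - y‖ ^ 2 ≤ ‖x - y‖ ^ 2 :=
      pow_le_pow_left₀ (norm_nonneg _) hq 2
    have e1 : F x - y = (x - y) + (F x - x) := by abel
    have e2 : x + α • (F x - x) - y = (x - y) + α • (F x - x) := by abel
    rw [e1, norm_add_sq_real] at hq2
    rw [e2, norm_add_sq_real, real_inner_smul_right, norm_smul,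
      Real.norm_eq_abs, abs_of_pos hα]
    nlinarith [hq2, hα.le, sq_nonneg ‖F x - x‖]
  -- hence d1^2 + t*d0^2 ≤ dist(x,y)^2 for all y ∈ S
  have hC : 0 ≤ d1 ^ 2 + t * d0 ^ 2 := by positivity
  have hsqrt : Real.sqrt (d1 ^ 2 + t * d0 ^ 2) ≤ d0 := by
    rw [hd0]
    apply le_of_forall_gt_imp_ge_of_dense
    intro c hc
    obtain ⟨y, hy, hyd⟩ := (Metric.infDist_lt_iff hSne).mp hc
    have h1 : d1 ≤ dist (x + α • (F x - x)) y := Metric.infDist_le_dist_of_mem hy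
    rw [dist_eq_norm] at h1 hyd
    have h2 := key y hy
    have h3 : t * d0 ^ 2 ≤ α * (1 - α) * ‖F x - x‖ ^ 2 := by
      have h4 : t * d0 ^ 2 ≤ t * (κ ^ 2 * ‖F x - x‖ ^ 2) :=
        mul_le_mul_of_nonneg_left hregsq ht0
      have h5 : t * (κ ^ 2 * ‖F x - x‖ ^ 2) = δ * α * ‖F x - x‖ ^ 2 := by
        rw [ht, div_mul_eq_mul_div, div_eq_iff hκ2.ne']
        ring
      rw [h5] at h4
      have h6 : 0 ≤ α * (1 - α - δ) * ‖F x - x‖ ^ 2 :=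
        mul_nonneg (mul_nonneg hα.le (by linarith)) (sq_nonneg _)
      nlinarith
    have h6 : d1 ^ 2 + t * d0 ^ 2 ≤ ‖x - y‖ ^ 2 := by
      nlinarith [norm_nonneg (x + α • (F x - x) - y), hd1n]
    have h7 : Real.sqrt (d1 ^ 2 + t * d0 ^ 2) ≤ ‖x - y‖ := by
      have := Real.sqrt_le_sqrt h6
      rwa [Real.sqrt_sq (norm_nonneg _)] at this
    linarith
  have hd0sq : d1 ^ 2 + t * d0 ^ 2 ≤ d0 ^ 2 := by
    have h := pow_le_pow_left₀ (Real.sqrt_nonneg _) hsqrt 2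
    rwa [Real.sq_sqrt hC] at h
  -- conclude
  have hgoal : (1 - δ * α / (4 * κ ^ 2)) = 1 - t / 4 := by
    rw [ht]; ring
  rw [hgoal]
  have hb : 0 ≤ (1 - t / 4) * d0 := mul_nonneg (by linarith) hd0n
  have hfin : d1 ^ 2 ≤ ((1 - t / 4) * d0) ^ 2 := by
    nlinarith [mul_nonneg (mul_nonneg ht0 ht0) (sq_nonneg d0),
      mul_nonneg ht0 (sq_nonneg d0)]
  have := Real.sqrt_le_sqrt hfin
  rwa [Real.sqrt_sq hd1n, Real.sqrt_sq hb] at this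
end

section
/- Let F : H → H (H a real Hilbert space) be quasi-nonexpansive with nonempty fixed point set and linearly regular with constant κ > 0, and fix δ ∈ (0,1). Consider the relaxed Krasnosel'skiĭ–Mann iteration x_{k+1} = x_k + α(F(x_k) − x_k) with constant stepsize α ∈ (0, 1−δ] and α(1−α) ≤ κ². Then d_{Fix(F)}(x_k) ≤ (1 − δα/(4κ²))^k d_{Fix(F)}(x_0) for all k ≥ 0, i.e., the iteration converges to Fix(F) at a linear (geometric) rate. -/
open Metric Real
open scoped RealInnerProductSpace

private lemma KM_step
    {H : Type*} [NormedAddCommGroup H] [InnerProductSpace ℝ H]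
    (F : H → H)
    (hQNE : ∀ x y, F y = y → ‖F x - y‖ ≤ ‖x - y‖)
    (hne : ∃ y, F y = y)
    (κ : ℝ) (hκ : 0 < κ)
    (hreg : ∀ x, Metric.infDist x {y : H | F y = y} ≤ κ * ‖F x - x‖)
    (δ : ℝ) (hδ : δ ∈ Set.Ioo (0 : ℝ) 1)
    (α : ℝ) (hα : 0 < α) (hα' : α ≤ 1 - δ)
    (hκα : α * (1 - α) ≤ κ ^ 2)
    (z : H) :
    Metric.infDist (z + α • (F z - z)) {y : H | F y = y} ≤
      (1 - δ * α / (4 * κ ^ 2)) * Metric.infDist z {y : H | F y = y} := by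
  set S : Set H := {y : H | F y = y} with hS
  clear_value S
  set d : ℝ := Metric.infDist z S with hd
  have hd0 : 0 ≤ d := Metric.infDist_nonneg
  set u : H := F z - z with hu
  set w : H := z + α • u with hw
  have hdu : d ≤ κ * ‖u‖ := hreg z
  clear_value d u w
  have hκ2 : (0:ℝ) < κ ^ 2 := by positivity
  have hδ0 : 0 < δ := hδ.1
  have hδ1 : δ < 1 := hδ.2
  have h1α : δ ≤ 1 - α := by linarith
  set c : ℝ := α * (1 - α) / κ ^ 2 with hc
  clear_value c
  have hαα : (0:ℝ) ≤ α * (1 - α) := mul_nonneg hα.le (by linarith)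
  have hc0 : 0 ≤ c := by rw [hc]; exact div_nonneg hαα hκ2.le
  have hc1 : c ≤ 1 := by rw [hc, div_le_one hκ2]; exact hκα
  have hdu2 : d ^ 2 ≤ κ ^ 2 * ‖u‖ ^ 2 := by
    have h := mul_self_le_mul_self hd0 hdu
    calc d ^ 2 = d * d := sq d
      _ ≤ κ * ‖u‖ * (κ * ‖u‖) := h
      _ = κ ^ 2 * ‖u‖ ^ 2 := by ring
  -- squared contraction: infDist w S ^ 2 ≤ (1 - c) * d ^ 2
  have hsq : Metric.infDist w S ^ 2 ≤ (1 - c) * d ^ 2 := by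
    apply le_of_forall_pos_le_add
    intro ε hε
    have h2d : (0:ℝ) < 2 * d + 1 := by linarith
    set ε' : ℝ := min 1 (ε / (2 * d + 1)) with hε'
    clear_value ε'
    have hε'pos : 0 < ε' := by
      rw [hε']; exact lt_min one_pos (by positivity)
    have hε'1 : ε' ≤ 1 := hε' ▸ min_le_left _ _
    have hε'2 : (2 * d + 1) * ε' ≤ ε := by
      have h := hε' ▸ min_le_right 1 (ε / (2 * d + 1))
      calc (2 * d + 1) * ε' ≤ (2 * d + 1) * (ε / (2 * d + 1)) :=
            mul_le_mul_of_nonneg_left h h2d.le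
        _ = ε := by field_simp
    have hSne : S.Nonempty := by
      obtain ⟨y0, hy0⟩ := hne
      exact ⟨y0, by rw [hS]; exact hy0⟩
    obtain ⟨y, hyS, hy⟩ := (Metric.infDist_lt_iff hSne).mp
      (show Metric.infDist z S < d + ε' by rw [← hd]; linarith)
    have hFy : F y = y := by rw [hS] at hyS; exact hyS
    have hdist : ‖z - y‖ < d + ε' := by rwa [← dist_eq_norm]
    have hqne : ‖F z - y‖ ≤ ‖z - y‖ := hQNE z y hFy
    have hinner : 2 * (inner ℝ (z - y) u : ℝ) ≤ - ‖u‖ ^ 2 := by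
      have h1 : ‖(z - y) + u‖ ^ 2 ≤ ‖z - y‖ ^ 2 := by
        have he : (z - y) + u = F z - y := by rw [hu]; abel
        rw [he]
        exact pow_le_pow_left₀ (norm_nonneg _) hqne 2
      have h2 : ‖(z - y) + u‖ ^ 2 = ‖z - y‖ ^ 2 + 2 * (inner ℝ (z - y) u : ℝ) + ‖u‖ ^ 2 := by
        rw [@norm_add_sq_real]
      linarith
    have hwy : ‖w - y‖ ^ 2 ≤ ‖z - y‖ ^ 2 - α * (1 - α) * ‖u‖ ^ 2 := by
      have h3 : w - y = (z - y) + α • u := by rw [hw]; abel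
      have h4 : ‖(z - y) + α • u‖ ^ 2
          = ‖z - y‖ ^ 2 + 2 * (α * (inner ℝ (z - y) u : ℝ)) + α ^ 2 * ‖u‖ ^ 2 := by
        rw [@norm_add_sq_real, real_inner_smul_right, norm_smul]
        simp [abs_of_pos hα]
        ring
      rw [h3, h4]
      have h5 : α * (2 * (inner ℝ (z - y) u : ℝ)) ≤ α * (- ‖u‖ ^ 2) :=
        mul_le_mul_of_nonneg_left hinner hα.le
      nlinarith [h5]
    have hwle : Metric.infDist w S ≤ ‖w - y‖ := by
      rw [← dist_eq_norm]; exact Metric.infDist_le_dist_of_mem hyS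
    have hwsq : Metric.infDist w S ^ 2 ≤ ‖w - y‖ ^ 2 :=
      pow_le_pow_left₀ Metric.infDist_nonneg hwle 2
    have hcu : c * d ^ 2 ≤ α * (1 - α) * ‖u‖ ^ 2 := by
      have hdk : d ^ 2 / κ ^ 2 ≤ ‖u‖ ^ 2 := by
        rw [div_le_iff₀ hκ2]; linarith
      calc c * d ^ 2 = α * (1 - α) * (d ^ 2 / κ ^ 2) := by rw [hc]; ring
        _ ≤ α * (1 - α) * ‖u‖ ^ 2 := mul_le_mul_of_nonneg_left hdk hαα
    have hzynn : (0:ℝ) ≤ ‖z - y‖ := norm_nonneg _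
    have hzy2 : ‖z - y‖ ^ 2 ≤ d ^ 2 + (2 * d + 1) * ε' := by
      have hsq1 : ‖z - y‖ ^ 2 ≤ (d + ε') ^ 2 := pow_le_pow_left₀ hzynn hdist.le 2
      have hε'sq : ε' ^ 2 ≤ ε' := by
        have h := mul_le_mul_of_nonneg_left hε'1 hε'pos.le
        calc ε' ^ 2 = ε' * ε' := sq ε'
          _ ≤ ε' * 1 := h
          _ = ε' := mul_one ε'
      have he : (d + ε') ^ 2 = d ^ 2 + 2 * d * ε' + ε' ^ 2 := by ring
      have hl : d ^ 2 + 2 * d * ε' + ε' ^ 2 ≤ d ^ 2 + (2 * d + 1) * ε' := by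
        have : (2 * d + 1) * ε' = 2 * d * ε' + ε' := by ring
        linarith
      linarith [hsq1, he ▸ hsq1]
    calc Metric.infDist w S ^ 2 ≤ ‖w - y‖ ^ 2 := hwsq
      _ ≤ ‖z - y‖ ^ 2 - α * (1 - α) * ‖u‖ ^ 2 := hwy
      _ ≤ d ^ 2 + (2 * d + 1) * ε' - c * d ^ 2 := by linarith
      _ ≤ (1 - c) * d ^ 2 + ε := by linarith
  -- conclude
  set r : ℝ := 1 - δ * α / (4 * κ ^ 2) with hr
  clear_value r
  have h1 : δ * α / (4 * κ ^ 2) ≤ c / 2 := by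
    rw [hc, div_div, div_le_div_iff₀ (by positivity : (0:ℝ) < 4 * κ ^ 2)
      (by positivity : (0:ℝ) < κ ^ 2 * 2)]
    have key : δ * (α * κ ^ 2) ≤ (1 - α) * (α * κ ^ 2) :=
      mul_le_mul_of_nonneg_right h1α (by positivity)
    have hpos : (0:ℝ) ≤ (1 - α) * (α * κ ^ 2) := by nlinarith [key, mul_pos hα hκ2]
    nlinarith [key, hpos]
  have h3 : 0 ≤ 1 - c / 2 := by linarith
  have h2 : 1 - c / 2 ≤ r := by rw [hr]; linarith
  have hrnn : 0 ≤ r := h3.trans h2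
  have hr2 : 1 - c ≤ r ^ 2 := by
    have h4 : (1 - c / 2) * (1 - c / 2) ≤ r * r := mul_le_mul h2 h2 h3 hrnn
    have h6 : (1 - c / 2) * (1 - c / 2) = 1 - c + c ^ 2 / 4 := by ring
    have h7 : r * r = r ^ 2 := by ring
    linarith [sq_nonneg c, h6 ▸ h7 ▸ h4]
  have hfinal : Metric.infDist w S ^ 2 ≤ (r * d) ^ 2 := by
    have h5 : (1 - c) * d ^ 2 ≤ r ^ 2 * d ^ 2 :=
      mul_le_mul_of_nonneg_right hr2 (sq_nonneg d)
    calc Metric.infDist w S ^ 2 ≤ (1 - c) * d ^ 2 := hsq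
      _ ≤ r ^ 2 * d ^ 2 := h5
      _ = (r * d) ^ 2 := by ring
  have h := Real.sqrt_le_sqrt hfinal
  rwa [Real.sqrt_sq Metric.infDist_nonneg,
    Real.sqrt_sq (mul_nonneg hrnn hd0)] at h

/-- Centralized linear convergence of the relaxed Krasnosel'skiĭ–Mann iteration:
for `F` quasi-nonexpansive, linearly regular with constant `κ > 0`, `δ ∈ (0,1)`,
`α ∈ (0, 1-δ]` with `α(1-α) ≤ κ²`, the iterates `x_{k+1} = x_k + α(F(x_k) - x_k)`
satisfy `d_{Fix F}(x_k) ≤ (1 - δα/(4κ²))^k d_{Fix F}(x_0)`. -/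
theorem KM_linear_convergence
    {H : Type*} [NormedAddCommGroup H] [InnerProductSpace ℝ H]
    (F : H → H)
    (hQNE : ∀ x y, F y = y → ‖F x - y‖ ≤ ‖x - y‖)
    (hne : ∃ y, F y = y)
    (κ : ℝ) (hκ : 0 < κ)
    (hreg : ∀ x, Metric.infDist x {y : H | F y = y} ≤ κ * ‖F x - x‖)
    (δ : ℝ) (hδ : δ ∈ Set.Ioo (0 : ℝ) 1)
    (α : ℝ) (hα : 0 < α) (hα' : α ≤ 1 - δ)
    (hκα : α * (1 - α) ≤ κ ^ 2)
    (x : ℕ → H)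
    (hrec : ∀ k, x (k + 1) = x k + α • (F (x k) - x k)) :
    ∀ k, Metric.infDist (x k) {y : H | F y = y} ≤
      (1 - δ * α / (4 * κ ^ 2)) ^ k * Metric.infDist (x 0) {y : H | F y = y} := by
  have hδ0 := hδ.1
  have hstep := KM_step F hQNE hne κ hκ hreg δ hδ α hα hα' hκα
  have hrnn : (0:ℝ) ≤ 1 - δ * α / (4 * κ ^ 2) := by
    have hκ2 : α * δ ≤ κ ^ 2 := by nlinarith
    have : δ * α / (4 * κ ^ 2) ≤ 1 / 4 := by
      rw [div_le_div_iff₀ (by positivity) (by norm_num)]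
      nlinarith
    linarith
  intro k
  induction k with
  | zero => simp
  | succ k ih =>
    rw [hrec k, pow_succ']
    calc Metric.infDist (x k + α • (F (x k) - x k)) {y : H | F y = y}
        ≤ (1 - δ * α / (4 * κ ^ 2)) * Metric.infDist (x k) {y : H | F y = y} :=
          hstep (x k)
      _ ≤ (1 - δ * α / (4 * κ ^ 2)) *
          ((1 - δ * α / (4 * κ ^ 2)) ^ k * Metric.infDist (x 0) {y : H | F y = y}) :=
          mul_le_mul_of_nonneg_left ih hrnn
      _ = _ := by ring
end
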